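/- Trace gap under the sample-size gap condition: suppose for two candidate domains m and m_s the sample covariances Σ^{[m]}, Σ^{[m_s]}, Σ^{[0]} all have eigenvalues in [τ₁, τ₂], and τ₁²(n₀/N_m) - τ₂²(n₀/N_{m_s}) ≥ c₃ > 0 after dividing through appropriately. Then tr(G^{[m]⁻¹}G^{[0]}) - tr(G^{[m_s]⁻¹}G^{[0]}) ≥ (p/τ₂)·(τ₁²(n₀/N_m) - τ₂²(n₀/N_{m_s}))·(1/τ₁) > 0, i.e., the trace penalty is strictly larger for the domain with smaller sample size N_m < (τ₁²/τ₂²)N_{m_s}. -/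

import Mathlib

open Matrix

lemma psd_trace_nonneg {p : ℕ} {M : Matrix (Fin p) (Fin p) ℝ} (h : M.PosSemidef) :
    0 ≤ M.trace := by
  rw [Matrix.trace]
  apply Finset.sum_nonneg
  intro i _
  have := h.dotProduct_mulVec_nonneg (Pi.single i 1)
  simpa [dotProduct, Matrix.mulVec, Pi.single_apply, Finset.sum_ite_eq,
    Matrix.diag] using this

lemma psd_smul {p : ℕ} {M : Matrix (Fin p) (Fin p) ℝ} (h : M.PosSemidef) {c : ℝ}
    (hc : 0 ≤ c) : (c • M).PosSemidef := by
  have hH : (c • M).IsHermitian := by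
    unfold Matrix.IsHermitian
    rw [Matrix.conjTranspose_smul, h.1.eq]
    simp
  refine .of_dotProduct_mulVec_nonneg hH fun x => ?_
  rw [smul_mulVec, dotProduct_smul]
  exact mul_nonneg hc (h.dotProduct_mulVec_nonneg x)

open scoped MatrixOrder in
lemma psd_trace_mul_nonneg {p : ℕ} {M N : Matrix (Fin p) (Fin p) ℝ}
    (hM : M.PosSemidef) (hN : N.PosSemidef) : 0 ≤ (M * N).trace := by
  set R := CFC.sqrt M with hR
  have hRR : R * R = M := CFC.sqrt_mul_sqrt_self M hM.nonneg
  have h1 : (M * N).trace = (R * N * R).trace := by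
    rw [← hRR, Matrix.mul_assoc, Matrix.trace_mul_comm, Matrix.mul_assoc]
  rw [h1]
  have hRh : Rᴴ = R := (CFC.sqrt_nonneg M).posSemidef.1
  have := hN.conjTranspose_mul_mul_same R
  rw [hRh] at this
  exact psd_trace_nonneg this

open scoped MatrixOrder in
/-- Key conjugation identity: if `A` is posdef with inverse square root `B`,
then `B * (c • 1 - A) * B = c • A⁻¹ - 1`. -/
lemma inv_bound_aux {p : ℕ} {A : Matrix (Fin p) (Fin p) ℝ} (hA : A.PosDef) (c : ℝ) :
    (CFC.sqrt A⁻¹) * (c • (1 : Matrix (Fin p) (Fin p) ℝ) - A) *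
      (CFC.sqrt A⁻¹) = c • A⁻¹ - 1 := by
  set B := CFC.sqrt A⁻¹ with hB
  have hBB : B * B = A⁻¹ := CFC.sqrt_mul_sqrt_self A⁻¹ hA.inv.posSemidef.nonneg
  have hdet : IsUnit A.det := isUnit_iff_ne_zero.mpr (ne_of_gt hA.det_pos)
  have h1 : B * B * A = 1 := by rw [hBB, Matrix.nonsing_inv_mul A hdet]
  have h2 : B * (B * A) = 1 := by rw [← Matrix.mul_assoc]; exact h1
  have h3 : (B * A) * B = 1 := mul_eq_one_comm.mp h2
  have hBAB : B * A * B = 1 := h3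
  calc B * (c • (1 : Matrix (Fin p) (Fin p) ℝ) - A) * B
      = c • (B * B) - B * A * B := by
        rw [Matrix.mul_sub, Matrix.sub_mul, Matrix.mul_smul, Matrix.smul_mul, Matrix.mul_one]
    _ = c • A⁻¹ - 1 := by rw [hBB, hBAB]

open scoped MatrixOrder in
lemma inv_upper {p : ℕ} {A : Matrix (Fin p) (Fin p) ℝ} (hA : A.PosDef) {t : ℝ}
    (ht : 0 < t) (h : (A - t • (1 : Matrix (Fin p) (Fin p) ℝ)).PosSemidef) :
    (t⁻¹ • (1 : Matrix (Fin p) (Fin p) ℝ) - A⁻¹).PosSemidef := by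
  set B := CFC.sqrt A⁻¹ with hB
  have key : B * (t • (1 : Matrix (Fin p) (Fin p) ℝ) - A) * B = t • A⁻¹ - 1 :=
    inv_bound_aux hA t
  have h' : (A - t • (1 : Matrix (Fin p) (Fin p) ℝ)) = -(t • (1:Matrix (Fin p) (Fin p) ℝ) - A) :=
    (neg_sub _ _).symm
  have key2 : B * (A - t • (1 : Matrix (Fin p) (Fin p) ℝ)) * B = 1 - t • A⁻¹ := by
    rw [h', Matrix.mul_neg, Matrix.neg_mul, key, neg_sub]
  have hRh : Bᴴ = B := (CFC.sqrt_nonneg A⁻¹).posSemidef.1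
  have hpsd : (B * (A - t • (1 : Matrix (Fin p) (Fin p) ℝ)) * B).PosSemidef := by
    have := h.conjTranspose_mul_mul_same B
    rwa [hRh] at this
  rw [key2] at hpsd
  have := psd_smul hpsd (le_of_lt (inv_pos.mpr ht))
  have heq : t⁻¹ • ((1 : Matrix (Fin p) (Fin p) ℝ) - t • A⁻¹)
      = t⁻¹ • (1 : Matrix (Fin p) (Fin p) ℝ) - A⁻¹ := by
    rw [smul_sub, smul_smul, inv_mul_cancel₀ (ne_of_gt ht), one_smul]
  rwa [heq] at this

open scoped MatrixOrder in
lemma inv_lower {p : ℕ} {A : Matrix (Fin p) (Fin p) ℝ} (hA : A.PosDef) {t : ℝ}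
    (ht : 0 < t) (h : (t • (1 : Matrix (Fin p) (Fin p) ℝ) - A).PosSemidef) :
    (A⁻¹ - t⁻¹ • (1 : Matrix (Fin p) (Fin p) ℝ)).PosSemidef := by
  set B := CFC.sqrt A⁻¹ with hB
  have key : B * (t • (1 : Matrix (Fin p) (Fin p) ℝ) - A) * B = t • A⁻¹ - 1 :=
    inv_bound_aux hA t
  have hRh : Bᴴ = B := (CFC.sqrt_nonneg A⁻¹).posSemidef.1
  have hpsd : (B * (t • (1 : Matrix (Fin p) (Fin p) ℝ) - A) * B).PosSemidef := by
    have := h.conjTranspose_mul_mul_same B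
    rwa [hRh] at this
  rw [key] at hpsd
  have := psd_smul hpsd (le_of_lt (inv_pos.mpr ht))
  have heq : t⁻¹ • (t • A⁻¹ - (1 : Matrix (Fin p) (Fin p) ℝ))
      = A⁻¹ - t⁻¹ • (1 : Matrix (Fin p) (Fin p) ℝ) := by
    rw [smul_sub, smul_smul, inv_mul_cancel₀ (ne_of_gt ht), one_smul]
  rwa [heq] at this

/-- Lower bound for the trace of `A⁻¹ * S`. -/
lemma trace_inv_mul_ge {p : ℕ} {A S : Matrix (Fin p) (Fin p) ℝ} (hA : A.PosDef)
    (hS : S.PosSemidef) {τ₁ τ₂ : ℝ} (hτ₁ : 0 < τ₁) (hτ₂ : 0 < τ₂)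
    (hA2 : (τ₂ • (1 : Matrix (Fin p) (Fin p) ℝ) - A).PosSemidef)
    (hS1 : (S - τ₁ • (1 : Matrix (Fin p) (Fin p) ℝ)).PosSemidef) :
    (A⁻¹ * S).trace ≥ (p : ℝ) * τ₁ / τ₂ := by
  have h1 : 0 ≤ ((A⁻¹ - τ₂⁻¹ • (1 : Matrix (Fin p) (Fin p) ℝ)) * S).trace :=
    psd_trace_mul_nonneg (inv_lower hA hτ₂ hA2) hS
  have h2 : 0 ≤ (S - τ₁ • (1 : Matrix (Fin p) (Fin p) ℝ)).trace := psd_trace_nonneg hS1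
  have e1 : ((A⁻¹ - τ₂⁻¹ • (1 : Matrix (Fin p) (Fin p) ℝ)) * S).trace
      = (A⁻¹ * S).trace - τ₂⁻¹ * S.trace := by
    rw [Matrix.sub_mul, Matrix.trace_sub, Matrix.smul_mul, Matrix.one_mul, Matrix.trace_smul,
      smul_eq_mul]
  have e2 : (S - τ₁ • (1 : Matrix (Fin p) (Fin p) ℝ)).trace = S.trace - τ₁ * p := by
    rw [Matrix.trace_sub, Matrix.trace_smul, Matrix.trace_one, smul_eq_mul]
    simp
  rw [e1] at h1
  rw [e2] at h2
  have hS' : S.trace ≥ τ₁ * p := by linarith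
  have : (A⁻¹ * S).trace ≥ τ₂⁻¹ * (τ₁ * p) := by nlinarith [inv_pos.mpr hτ₂]
  calc (A⁻¹ * S).trace ≥ τ₂⁻¹ * (τ₁ * p) := this
    _ = (p : ℝ) * τ₁ / τ₂ := by field_simp

/-- Upper bound for the trace of `A⁻¹ * S`. -/
lemma trace_inv_mul_le {p : ℕ} {A S : Matrix (Fin p) (Fin p) ℝ} (hA : A.PosDef)
    (hS : S.PosSemidef) {τ₁ τ₂ : ℝ} (hτ₁ : 0 < τ₁) (hτ₂ : 0 < τ₂)
    (hA1 : (A - τ₁ • (1 : Matrix (Fin p) (Fin p) ℝ)).PosSemidef)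
    (hS2 : (τ₂ • (1 : Matrix (Fin p) (Fin p) ℝ) - S).PosSemidef) :
    (A⁻¹ * S).trace ≤ (p : ℝ) * τ₂ / τ₁ := by
  have h1 : 0 ≤ ((τ₁⁻¹ • (1 : Matrix (Fin p) (Fin p) ℝ) - A⁻¹) * S).trace :=
    psd_trace_mul_nonneg (inv_upper hA hτ₁ hA1) hS
  have h2 : 0 ≤ (τ₂ • (1 : Matrix (Fin p) (Fin p) ℝ) - S).trace := psd_trace_nonneg hS2
  have hS0 : 0 ≤ S.trace := psd_trace_nonneg hS
  have e1 : ((τ₁⁻¹ • (1 : Matrix (Fin p) (Fin p) ℝ) - A⁻¹) * S).trace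
      = τ₁⁻¹ * S.trace - (A⁻¹ * S).trace := by
    rw [Matrix.sub_mul, Matrix.trace_sub, Matrix.smul_mul, Matrix.one_mul, Matrix.trace_smul,
      smul_eq_mul]
  have e2 : (τ₂ • (1 : Matrix (Fin p) (Fin p) ℝ) - S).trace = τ₂ * p - S.trace := by
    rw [Matrix.trace_sub, Matrix.trace_smul, Matrix.trace_one, smul_eq_mul]
    simp
  rw [e1] at h1
  rw [e2] at h2
  have hS' : S.trace ≤ τ₂ * p := by linarith
  have : (A⁻¹ * S).trace ≤ τ₁⁻¹ * (τ₂ * p) := by nlinarith [inv_pos.mpr hτ₁]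
  calc (A⁻¹ * S).trace ≤ τ₁⁻¹ * (τ₂ * p) := this
    _ = (p : ℝ) * τ₂ / τ₁ := by field_simp

lemma smul_inv_trace_eq {p : ℕ} (A S : Matrix (Fin p) (Fin p) ℝ) (hA : A.PosDef)
    {N n : ℝ} (hN : 0 < N) :
    (((N • A)⁻¹) * (n • S)).trace = (n / N) * (A⁻¹ * S).trace := by
  haveI : Invertible N := invertibleOfNonzero (ne_of_gt hN)
  have hdet : IsUnit A.det := isUnit_iff_ne_zero.mpr (ne_of_gt hA.det_pos)
  rw [Matrix.inv_smul (A := A) N hdet, invOf_eq_inv, Matrix.smul_mul, Matrix.mul_smul,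
    Matrix.trace_smul, Matrix.trace_smul, smul_eq_mul, smul_eq_mul, div_eq_mul_inv]
  ring

/-- Trace gap under the sample-size gap condition. -/
theorem trace_gap_sample_size
    (p : ℕ) (hp : 0 < p)
    (Sm Sms S0 : Matrix (Fin p) (Fin p) ℝ)
    (τ₁ τ₂ Nm Nms n₀ c₃ : ℝ)
    (hτ : 0 < τ₁) (hττ : τ₁ ≤ τ₂) (hNm : 0 < Nm) (hNms : 0 < Nms) (hn₀ : 0 < n₀)
    (hSm : Sm.PosDef) (hSms : Sms.PosDef) (hS0 : S0.PosDef)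
    (hSm1 : (Sm - τ₁ • (1 : Matrix (Fin p) (Fin p) ℝ)).PosSemidef)
    (hSm2 : (τ₂ • (1 : Matrix (Fin p) (Fin p) ℝ) - Sm).PosSemidef)
    (hSms1 : (Sms - τ₁ • (1 : Matrix (Fin p) (Fin p) ℝ)).PosSemidef)
    (hSms2 : (τ₂ • (1 : Matrix (Fin p) (Fin p) ℝ) - Sms).PosSemidef)
    (hS01 : (S0 - τ₁ • (1 : Matrix (Fin p) (Fin p) ℝ)).PosSemidef)
    (hS02 : (τ₂ • (1 : Matrix (Fin p) (Fin p) ℝ) - S0).PosSemidef)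
    (hgap : τ₁ ^ 2 * (n₀ / Nm) - τ₂ ^ 2 * (n₀ / Nms) ≥ c₃)
    (hc₃ : 0 < c₃) :
    (((Nm • Sm)⁻¹) * (n₀ • S0)).trace - (((Nms • Sms)⁻¹) * (n₀ • S0)).trace
        ≥ ((p : ℝ) / τ₂) * (τ₁ ^ 2 * (n₀ / Nm) - τ₂ ^ 2 * (n₀ / Nms)) * (1 / τ₁) ∧
      0 < ((p : ℝ) / τ₂) * (τ₁ ^ 2 * (n₀ / Nm) - τ₂ ^ 2 * (n₀ / Nms)) * (1 / τ₁) := by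
  have hτ₂ : 0 < τ₂ := lt_of_lt_of_le hτ hττ
  have ha : (Sm⁻¹ * S0).trace ≥ (p : ℝ) * τ₁ / τ₂ :=
    trace_inv_mul_ge hSm hS0.posSemidef hτ hτ₂ hSm2 hS01
  have hb : (Sms⁻¹ * S0).trace ≤ (p : ℝ) * τ₂ / τ₁ :=
    trace_inv_mul_le hSms hS0.posSemidef hτ hτ₂ hSms1 hS02
  rw [smul_inv_trace_eq Sm S0 hSm hNm, smul_inv_trace_eq Sms S0 hSms hNms]
  have hpm : 0 < n₀ / Nm := div_pos hn₀ hNm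
  have hpms : 0 < n₀ / Nms := div_pos hn₀ hNms
  constructor
  · have h1 : (n₀ / Nm) * (Sm⁻¹ * S0).trace ≥ (n₀ / Nm) * ((p : ℝ) * τ₁ / τ₂) :=
      mul_le_mul_of_nonneg_left ha (le_of_lt hpm)
    have h2 : (n₀ / Nms) * (Sms⁻¹ * S0).trace ≤ (n₀ / Nms) * ((p : ℝ) * τ₂ / τ₁) :=
      mul_le_mul_of_nonneg_left hb (le_of_lt hpms)
    have heq : (n₀ / Nm) * ((p : ℝ) * τ₁ / τ₂) - (n₀ / Nms) * ((p : ℝ) * τ₂ / τ₁)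
        = ((p : ℝ) / τ₂) * (τ₁ ^ 2 * (n₀ / Nm) - τ₂ ^ 2 * (n₀ / Nms)) * (1 / τ₁) := by
      field_simp
    linarith
  · have hpp : (0 : ℝ) < p := by exact_mod_cast hp
    have : (0 : ℝ) < τ₁ ^ 2 * (n₀ / Nm) - τ₂ ^ 2 * (n₀ / Nms) := lt_of_lt_of_le hc₃ hgap
    positivity
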